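/- arXiv:1508.06754 — 3 statements merged into one kernel-verified Lean document; each statement's English description precedes it below -/
import Mathlib

section
/- For every N ≥ 1, the word 0·∏_{n=1}^{N} f'_{2n+1} (the letter 0 followed by the concatenation of the first N odd-indexed co-Fibonacci words) is a prefix of the Fibonacci infinite word f. In other words, f = 0·∏_{n≥1} f'_{2n+1}. -/
/-- The finite Fibonacci words over the alphabet {0,1}: f 1 = 1, f 2 = 0,
and f n = f (n-1) ++ f (n-2) for n ≥ 3. -/
def fibWord : ℕ → List ℕ
  | 0 => []
  | 1 => [1]
  | 2 => [0]
  | n + 3 => fibWord (n + 2) ++ fibWord (n + 1)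

/-- A finite word is a prefix of the Fibonacci infinite word iff it is a
prefix of some finite Fibonacci word f m with m ≥ 2. -/
def IsFibPrefix (x : List ℕ) : Prop := ∃ m, 2 ≤ m ∧ x <+: fibWord m

/-- The co-Fibonacci word f' n = f (n-2) ++ f (n-1), for n ≥ 3. -/
def coFibWord (n : ℕ) : List ℕ := fibWord (n - 2) ++ fibWord (n - 1)

lemma key (N : ℕ) :
    [0] ++ ((List.range N).map (fun i => coFibWord (2 * (i + 1) + 1))).flatten
      = fibWord (2 * N + 2) := by
  induction N with
  | zero => rfl
  | succ n ih =>
    rw [List.range_succ, List.map_append, List.flatten_append, ← List.append_assoc, ih]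
    show fibWord (2 * n + 2) ++ (coFibWord (2 * (n + 1) + 1) ++ []) = fibWord (2 * (n + 1) + 2)
    have h1 : 2 * (n + 1) + 2 = (2 * n + 1) + 3 := by ring
    have h2 : 2 * (n + 1) + 1 = (2 * n + 1) + 2 := by ring
    rw [h1, h2, fibWord, fibWord]
    simp [coFibWord, List.append_assoc]

theorem stmt5 (N : ℕ) (hN : 1 ≤ N) :
    IsFibPrefix ([0] ++
      ((List.range N).map (fun i => coFibWord (2 * (i + 1) + 1))).flatten) := by
  exact ⟨2 * N + 2, by omega, key N ▸ List.prefix_refl _⟩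
end

section
/- For every N ≥ 1, the concatenation c_3·c_5⋯c_{2N+1} of the first N odd-indexed lower Christoffel words is a prefix of the Fibonacci infinite word f. In other words, f = ∏_{n≥1} c_{2n+1} (Melançon's factorization). -/
/-- The central word p n: the Fibonacci word f n with its last two letters removed. -/
def centralWord (n : ℕ) : List ℕ := (fibWord n).dropLast.dropLast

/-- The lower Christoffel word c n = 0 · p n · 1, for n ≥ 3. -/
def chrisWord (n : ℕ) : List ℕ := [0] ++ centralWord n ++ [1]

/-- The last two letters of fibWord (n+3). -/
def fibTail (n : ℕ) : List ℕ := if n % 2 = 0 then [0,1] else [1,0]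

lemma dl2 (a : List ℕ) (x y : ℕ) : (a ++ [x,y]).dropLast.dropLast = a := by
  have h : a ++ [x,y] = (a ++ [x]) ++ [y] := by simp
  rw [h, List.dropLast_concat, List.dropLast_concat]

lemma fib_eq : ∀ n, fibWord (n+3) = centralWord (n+3) ++ fibTail n := by
  intro n
  induction n using Nat.strong_induction_on with
  | _ n ih =>
    match n with
    | 0 => decide
    | 1 => decide
    | (m+2) =>
      have h1 := ih m (by omega)
      have h2 : fibWord (m+5) = fibWord (m+4) ++ centralWord (m+3) ++ fibTail m := by
        rw [show fibWord (m+5) = fibWord (m+4) ++ fibWord (m+3) from rfl, h1, List.append_assoc]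
      have h3 : centralWord (m+5) = fibWord (m+4) ++ centralWord (m+3) := by
        unfold centralWord
        rw [h2]
        unfold fibTail
        rcases Nat.even_or_odd m with he | ho
        · rw [if_pos (Nat.even_iff.mp he)]; exact dl2 _ _ _
        · rw [if_neg (by rw [Nat.odd_iff] at ho; omega : ¬ m % 2 = 0)]; exact dl2 _ _ _
      have h4 : fibTail (m+2) = fibTail m := by unfold fibTail; simp [Nat.add_mod_right]
      rw [← h3] at h2
      rw [show fibTail (m+2) = fibTail m from h4]
      exact h2

lemma central_rec (n : ℕ) : centralWord (n+5) = fibWord (n+4) ++ centralWord (n+3) := by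
  have h1 := fib_eq n
  have h2 : fibWord (n+5) = fibWord (n+4) ++ centralWord (n+3) ++ fibTail n := by
    rw [show fibWord (n+5) = fibWord (n+4) ++ fibWord (n+3) from rfl, h1, List.append_assoc]
  unfold centralWord
  rw [h2]
  unfold fibTail
  rcases Nat.even_or_odd n with he | ho
  · rw [if_pos (Nat.even_iff.mp he)]; exact dl2 _ _ _
  · rw [if_neg (by rw [Nat.odd_iff] at ho; omega : ¬ n % 2 = 0)]; exact dl2 _ _ _

lemma exchange : ∀ n, fibWord (n+4) ++ centralWord (n+3) = fibWord (n+3) ++ centralWord (n+4) := by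
  intro n
  induction n with
  | zero => decide
  | succ m ih =>
    have h : fibWord (m+5) ++ centralWord (m+4)
        = fibWord (m+4) ++ (fibWord (m+4) ++ centralWord (m+3)) := by
      rw [show fibWord (m+5) = fibWord (m+4) ++ fibWord (m+3) from rfl, List.append_assoc, ih]
    rw [h, ← central_rec m]

lemma fib_even (K : ℕ) : fibWord (2*K+4) = centralWord (2*K+4) ++ [1,0] := by
  have h := fib_eq (2*K+1)
  have hm : (2*K+1) % 2 = 1 := by omega
  rw [show fibTail (2*K+1) = [1,0] from by simp [fibTail, hm]] at h
  exact h

lemma prod_eq : ∀ M, (((List.range (M+1)).map (fun i => chrisWord (2 * (i + 1) + 1))).flatten)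
    = centralWord (2*M+4) ++ [1] := by
  intro M
  induction M with
  | zero => decide
  | succ K ih =>
    rw [List.range_succ, List.map_append, List.flatten_append, ih]
    simp only [List.map_cons, List.map_nil, List.flatten_cons, List.flatten_nil, List.append_nil]
    show centralWord (2*K+4) ++ [1] ++ chrisWord (2*K+5) = centralWord (2*K+6) ++ [1]
    have hex : fibWord (2*K+5) ++ centralWord (2*K+4) = fibWord (2*K+4) ++ centralWord (2*K+5) :=
      exchange (2*K+1)
    have hcr : centralWord (2*K+6) = fibWord (2*K+5) ++ centralWord (2*K+4) :=
      central_rec (2*K+1)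
    rw [chrisWord, hcr, ← List.append_assoc, ← List.append_assoc, hex, fib_even]
    simp [List.append_assoc]

theorem stmt12 (N : ℕ) (hN : 1 ≤ N) :
    IsFibPrefix (((List.range N).map (fun i => chrisWord (2 * (i + 1) + 1))).flatten) := by
  obtain ⟨M, rfl⟩ : ∃ M, N = M + 1 := ⟨N - 1, by omega⟩
  refine ⟨2*M+4, by omega, ?_⟩
  rw [prod_eq M, fib_even M]
  exact ⟨[0], by simp⟩
end

section
/- For every N ≥ 2, the word 01·∏_{n=2}^{N}(rev(f_n)·rev(f_n)) (the word 01 followed by the concatenation of the squares of the reversals of the finite Fibonacci words) is a prefix of the Fibonacci infinite word f. In other words, f = 01·∏_{n≥2} rev(f_n)². -/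
/-- the alternating two-letter tail -/
def tl (n : ℕ) : List ℕ := if n % 2 = 0 then [1, 0] else [0, 1]

lemma tl_two (n : ℕ) : tl (n + 2) = tl n := by
  simp [tl, Nat.add_mod]

/-- pal k is fibWord (k+3) with its last two letters removed -/
def pal : ℕ → List ℕ
  | 0 => []
  | 1 => [0]
  | k + 2 => pal (k + 1) ++ tl (k + 4) ++ pal k

lemma fib3 (n : ℕ) : fibWord (n + 3) = fibWord (n + 2) ++ fibWord (n + 1) := rfl

lemma lemC : ∀ k, pal (k + 1) ++ tl (k + 4) ++ pal k = pal k ++ tl (k + 3) ++ pal (k + 1) := by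
  intro k
  induction k with
  | zero => simp [pal, tl]
  | succ k ih =>
    have ih' := ih
    simp only [List.append_assoc] at ih'
    show pal (k + 2) ++ tl (k + 5) ++ pal (k + 1) = pal (k + 1) ++ tl (k + 4) ++ pal (k + 2)
    rw [show k + 5 = (k + 3) + 2 from rfl, tl_two (k + 3), pal]
    simp only [List.append_assoc]
    rw [← ih']

lemma lemA : ∀ k, fibWord (k + 3) = pal k ++ tl (k + 3) := by
  intro k
  induction k using Nat.twoStepInduction with
  | zero => simp [fibWord, pal, tl]
  | one => simp [fibWord, pal, tl]
  | more k ih1 ih2 =>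
    show fibWord (k + 5) = pal (k + 2) ++ tl (k + 5)
    rw [show (k + 5) = (k + 2) + 3 from rfl, fib3, show (k + 2) + 2 = (k + 1) + 3 from rfl,
      show (k + 2) + 1 = k + 3 from rfl, ih2, ih1,
      show (k + 2) + 3 = (k + 3) + 2 from rfl, tl_two (k + 3), pal]
    simp [List.append_assoc]

lemma lemB : ∀ k, (fibWord (k + 3)).reverse = tl (k + 4) ++ pal k := by
  intro k
  induction k using Nat.twoStepInduction with
  | zero => simp [fibWord, pal, tl]
  | one =>
    show (fibWord 4).reverse = tl 5 ++ pal 1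
    simp [fibWord, pal, tl]
  | more k ih1 ih2 =>
    show (fibWord (k + 5)).reverse = tl (k + 6) ++ pal (k + 2)
    rw [show (k + 5) = (k + 2) + 3 from rfl, fib3, List.reverse_append,
      show (k + 2) + 2 = (k + 1) + 3 from rfl, show (k + 2) + 1 = k + 3 from rfl, ih2, ih1,
      show k + 6 = (k + 4) + 2 from rfl, tl_two (k + 4),
      show (k + 1) + 4 = (k + 3) + 2 from rfl, tl_two (k + 3), pal]
    have c := lemC k
    simp only [List.append_assoc] at c ⊢
    rw [c]

lemma lemD (N : ℕ) (hN : 2 ≤ N) :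
    fibWord N ++ (pal (N - 2) ++ tl (N + 2)) = (pal (N - 2) ++ tl (N + 1)) ++ fibWord N := by
  match N, hN with
  | 2, _ => simp [fibWord, pal, tl]
  | (k + 3), _ =>
    have h1 : k + 3 - 2 = k + 1 := by omega
    rw [h1, lemA k, tl_two (k + 3), show k + 3 + 1 = k + 4 from rfl]
    -- (pal k ++ tl (k+3)) ++ (pal (k+1) ++ tl (k+3)) = (pal (k+1) ++ tl (k+4)) ++ (pal k ++ tl (k+3))
    simpa only [List.append_assoc] using (congrArg (· ++ tl (k + 3)) (lemC k)).symm

lemma keyStep (W p t t' fN fN3 : List ℕ)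
    (h1 : W ++ t = fN3 ++ fN)
    (h2 : fN ++ (p ++ t) = (p ++ t') ++ fN) :
    W ++ ((t ++ p) ++ (t ++ p)) ++ t' = fN3 ++ (((p ++ t') ++ fN) ++ (p ++ t')) := by
  have e1 : W ++ ((t ++ p) ++ (t ++ p)) ++ t' = (W ++ t) ++ ((p ++ (t ++ p)) ++ t') := by
    simp [List.append_assoc]
  rw [e1, h1]
  have e2 : (fN3 ++ fN) ++ ((p ++ (t ++ p)) ++ t') = fN3 ++ ((fN ++ (p ++ t)) ++ (p ++ t')) := by
    simp [List.append_assoc]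
  rw [e2, h2]

lemma lemQ (N : ℕ) (hN : 2 ≤ N) :
    ([0, 1] ++
      ((List.range (N - 1)).map
        (fun i => (fibWord (i + 2)).reverse ++ (fibWord (i + 2)).reverse)).flatten) ++ tl N
      = fibWord (N + 3) ++ fibWord N := by
  induction N, hN using Nat.le_induction with
  | base => decide
  | succ N hN ih =>
    have hr : N + 1 - 1 = (N - 1) + 1 := by omega
    rw [hr, List.range_succ, List.map_append, List.flatten_append]
    simp only [List.map_cons, List.map_nil, List.flatten_cons, List.flatten_nil,
      List.append_nil]
    rw [show N - 1 + 2 = N + 1 from by omega]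
    have hk1 : N - 2 + 3 = N + 1 := by omega
    have hk2 : N - 2 + 4 = N + 2 := by omega
    have hA := lemA (N - 2)
    rw [hk1] at hA
    have hB := lemB (N - 2)
    rw [hk1, hk2] at hB
    have htl : tl (N + 2) = tl N := tl_two N
    have hD := lemD N hN
    rw [htl] at hD
    have e4 : fibWord (N + 4) = fibWord (N + 3) ++ fibWord (N + 2) := fib3 (N + 1)
    have e2 : fibWord (N + 2) = fibWord (N + 1) ++ fibWord N := by
      rw [show N + 2 = (N - 1) + 3 from by omega, fib3,
        show N - 1 + 2 = N + 1 from by omega, show N - 1 + 1 = N from by omega]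
    have key := keyStep ([0, 1] ++
        ((List.range (N - 1)).map
          (fun i => (fibWord (i + 2)).reverse ++ (fibWord (i + 2)).reverse)).flatten)
      (pal (N - 2)) (tl N) (tl (N + 1)) (fibWord N) (fibWord (N + 3)) ih hD
    rw [hB, htl, e4, e2, hA]
    simpa [List.append_assoc] using key

lemma fibStep (n : ℕ) : fibWord (n + 2) <+: fibWord (n + 3) :=
  ⟨fibWord (n + 1), (fib3 n).symm⟩

theorem stmt19 (N : ℕ) (hN : 2 ≤ N) :
    IsFibPrefix ([0, 1] ++
      ((List.range (N - 1)).map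
        (fun i => (fibWord (i + 2)).reverse ++ (fibWord (i + 2)).reverse)).flatten) := by
  refine ⟨N + 4, by omega, ?_⟩
  have hQ := lemQ N hN
  have h1 : ([0, 1] ++
      ((List.range (N - 1)).map
        (fun i => (fibWord (i + 2)).reverse ++ (fibWord (i + 2)).reverse)).flatten)
      <+: fibWord (N + 3) ++ fibWord N := ⟨tl N, hQ⟩
  have h2 : fibWord N <+: fibWord (N + 2) := by
    have a := fibStep (N - 2)
    have b := fibStep (N - 1)
    rw [show N - 2 + 2 = N from by omega, show N - 2 + 3 = N + 1 from by omega] at a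
    rw [show N - 1 + 2 = N + 1 from by omega, show N - 1 + 3 = N + 2 from by omega] at b
    exact a.trans b
  obtain ⟨s, hs⟩ := h2
  have h3 : fibWord (N + 3) ++ fibWord N <+: fibWord (N + 4) := by
    refine ⟨s, ?_⟩
    rw [List.append_assoc, hs]
    exact (fib3 (N + 1)).symm
  exact h1.trans h3
end
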